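/- Let ρ ∈ (0,1), δ > 0, and set t_k = k·δ for k ≥ 1. Let Q_k : [t_k, ∞) → ℝ, k = 1, …, n (n ≥ 2), be differentiable nonnegative functions with Q₁'(t) ≤ −(ρ/t)·Q₁(t) for t ≥ t₁, Q_k'(t) ≤ −(ρ/t)·(Q_k(t) − Q_{k−1}(t)) for t ≥ t_k and 2 ≤ k ≤ n, and Q_k(t_k) ≤ 1 − ρ^k/k! for each k. Then there exists a real polynomial q with deg q ≤ n − 2 such that Q_n(t) ≤ t^{−ρ}·[ ((1 − ρ)·t₁^ρ·ρ^{n−1}/(n−1)!)·(ln t)^{n−1} + q(ln t) ] for all t ≥ t_n. -/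

import Mathlib

open Finset

/-- Key Grönwall-type lemma: if `f' ≤ -(ρ/t) f + (ρ/t) t^{-ρ} Σ cᵢ (ln t)^i` on `[s₀,∞)`,
then `t^ρ f(t) ≤ s₀^ρ f(s₀) + (g(ln t) - g(ln s₀))` where `g` is `ρ` times the
termwise antiderivative. -/
lemma cascade_key (ρ : ℝ) (hρ : 0 < ρ) (s₀ : ℝ) (hs : 0 < s₀)
    (f : ℝ → ℝ) (m : ℕ) (c : ℕ → ℝ)
    (hfd : ∀ t : ℝ, s₀ ≤ t → DifferentiableAt ℝ f t)
    (hf' : ∀ t : ℝ, s₀ ≤ t → deriv f t ≤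
      -(ρ / t) * f t + (ρ / t) * (t ^ (-ρ) * ∑ i ∈ Finset.range m, c i * (Real.log t) ^ i)) :
    ∀ t : ℝ, s₀ ≤ t → t ^ ρ * f t ≤ s₀ ^ ρ * f s₀ +
      ((∑ i ∈ Finset.range m, ρ * c i / (i + 1) * (Real.log t) ^ (i + 1)) -
       (∑ i ∈ Finset.range m, ρ * c i / (i + 1) * (Real.log s₀) ^ (i + 1))) := by
  set g : ℝ → ℝ := fun x => ∑ i ∈ Finset.range m, ρ * c i / (i + 1) * x ^ (i + 1) with hg
  set S : ℝ → ℝ := fun x => ∑ i ∈ Finset.range m, ρ * (c i * x ^ i) with hS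
  have hgS : ∀ x : ℝ, HasDerivAt g (S x) x := by
    intro x
    have : ∀ i ∈ Finset.range m,
        HasDerivAt (fun y : ℝ => ρ * c i / (i + 1) * y ^ (i + 1)) (ρ * (c i * x ^ i)) x := by
      intro i _
      have h1 := (hasDerivAt_pow (i + 1) x).const_mul (ρ * c i / (i + 1))
      refine h1.congr_deriv ?_
      have : ((i : ℝ) + 1) ≠ 0 := by positivity
      push_cast
      simp only [div_mul_eq_mul_div, Nat.add_sub_cancel]
      rw [div_eq_iff this]
      ring
    exact HasDerivAt.fun_sum this
  set F : ℝ → ℝ := fun t => t ^ ρ * f t - g (Real.log t) with hF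
  have hFd : ∀ t : ℝ, s₀ ≤ t → HasDerivAt F
      (ρ * t ^ (ρ - 1) * f t + t ^ ρ * deriv f t - S (Real.log t) * t⁻¹) t := by
    intro t ht
    have ht0 : 0 < t := lt_of_lt_of_le hs ht
    have h1 : HasDerivAt (fun t : ℝ => t ^ ρ) (ρ * t ^ (ρ - 1)) t :=
      Real.hasDerivAt_rpow_const (Or.inl (ne_of_gt ht0))
    have h2 := (hfd t ht).hasDerivAt
    have h3 : HasDerivAt (fun t : ℝ => g (Real.log t)) (S (Real.log t) * t⁻¹) t :=
      (hgS (Real.log t)).comp t (Real.hasDerivAt_log (ne_of_gt ht0))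
    exact (h1.mul h2).sub h3
  have hnonpos : ∀ t : ℝ, s₀ ≤ t →
      ρ * t ^ (ρ - 1) * f t + t ^ ρ * deriv f t - S (Real.log t) * t⁻¹ ≤ 0 := by
    intro t ht
    have ht0 : 0 < t := lt_of_lt_of_le hs ht
    have hA : (0 : ℝ) < t ^ ρ := Real.rpow_pos_of_pos ht0 ρ
    have hAinv : t ^ (-ρ) = (t ^ ρ)⁻¹ := Real.rpow_neg ht0.le ρ
    have hpow : t ^ (ρ - 1) = t ^ ρ * t⁻¹ := by
      rw [Real.rpow_sub ht0, Real.rpow_one, div_eq_mul_inv]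
    have hmul := mul_le_mul_of_nonneg_left (hf' t ht) hA.le
    rw [hAinv] at hmul
    have hexp : t ^ ρ * (-(ρ / t) * f t +
          ρ / t * ((t ^ ρ)⁻¹ * ∑ i ∈ Finset.range m, c i * (Real.log t) ^ i)) =
        -(ρ * (t ^ ρ * t⁻¹) * f t) +
          (ρ * ∑ i ∈ Finset.range m, c i * (Real.log t) ^ i) * t⁻¹ := by
      field_simp
    rw [hexp] at hmul
    have hSsum : S (Real.log t) = ρ * ∑ i ∈ Finset.range m, c i * (Real.log t) ^ i := by
      simp [hS, Finset.mul_sum]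
    rw [hpow, hSsum]
    linarith
  have cont : ContinuousOn F (Set.Ici s₀) := fun t ht =>
    ((hFd t ht).continuousAt).continuousWithinAt
  have diff : DifferentiableOn ℝ F (interior (Set.Ici s₀)) := by
    rw [interior_Ici]
    exact fun t ht => ((hFd t (le_of_lt ht)).differentiableAt).differentiableWithinAt
  have dnp : ∀ t ∈ interior (Set.Ici s₀), deriv F t ≤ 0 := by
    rw [interior_Ici]
    intro t ht
    rw [(hFd t (le_of_lt ht)).deriv]
    exact hnonpos t (le_of_lt ht)
  have anti := antitoneOn_of_deriv_nonpos (convex_Ici s₀) cont diff dnp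
  intro t ht
  have h := anti (Set.self_mem_Ici) (Set.mem_Ici.mpr ht) ht
  simp only [hF, hg] at h
  linarith

theorem stmt_14 (n : ℕ) (hn : 2 ≤ n) (ρ δ : ℝ) (hρ : ρ ∈ Set.Ioo (0:ℝ) 1) (hδ : 0 < δ)
    (Q : ℕ → ℝ → ℝ)
    (hnonneg : ∀ k : ℕ, 1 ≤ k → k ≤ n → ∀ t : ℝ, (k : ℝ) * δ ≤ t → 0 ≤ Q k t)
    (hdiff : ∀ k : ℕ, 1 ≤ k → k ≤ n → ∀ t : ℝ, (k : ℝ) * δ ≤ t →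
      DifferentiableAt ℝ (Q k) t)
    (hderiv1 : ∀ t : ℝ, (1 : ℝ) * δ ≤ t → deriv (Q 1) t ≤ -(ρ / t) * Q 1 t)
    (hderivk : ∀ k : ℕ, 2 ≤ k → k ≤ n → ∀ t : ℝ, (k : ℝ) * δ ≤ t →
      deriv (Q k) t ≤ -(ρ / t) * (Q k t - Q (k - 1) t))
    (hinit : ∀ k : ℕ, 1 ≤ k → k ≤ n →
      Q k ((k : ℝ) * δ) ≤ 1 - ρ ^ k / (Nat.factorial k : ℝ)) :
    ∃ q : Polynomial ℝ, q.natDegree ≤ n - 2 ∧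
      ∀ t : ℝ, (n : ℝ) * δ ≤ t →
        Q n t ≤ t ^ (-ρ) *
          (((1 - ρ) * δ ^ ρ * ρ ^ (n - 1) / (Nat.factorial (n - 1) : ℝ)) *
              (Real.log t) ^ (n - 1) +
            q.eval (Real.log t)) := by
  obtain ⟨hρ0, hρ1⟩ := hρ
  have main : ∀ k : ℕ, 1 ≤ k → k ≤ n → ∃ a : ℕ → ℝ,
      a (k - 1) = (1 - ρ) * δ ^ ρ * ρ ^ (k - 1) / (Nat.factorial (k - 1) : ℝ) ∧
      ∀ t : ℝ, (k : ℝ) * δ ≤ t →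
        Q k t ≤ t ^ (-ρ) * ∑ i ∈ Finset.range k, a i * (Real.log t) ^ i := by
    intro k hk1
    induction k, hk1 using Nat.le_induction with
    | base =>
      intro hkn
      have hs : (0 : ℝ) < (1 : ℝ) * δ := by linarith
      have hkey := cascade_key ρ hρ0 ((1 : ℝ) * δ) hs (Q 1) 0 (fun _ => 0)
        (fun t ht => hdiff 1 le_rfl hkn t (by push_cast; linarith))
        (by
          intro t ht
          simp only [Finset.range_zero, Finset.sum_empty, mul_zero, add_zero]
          exact hderiv1 t ht)
      refine ⟨fun _ => (1 - ρ) * δ ^ ρ, by simp, ?_⟩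
      intro t ht
      have ht' : (1 : ℝ) * δ ≤ t := by push_cast at ht; linarith
      have ht0 : 0 < t := lt_of_lt_of_le hs ht'
      have hQ1 := hinit 1 le_rfl hkn
      have hδρ : (0 : ℝ) < ((1:ℝ) * δ) ^ ρ := Real.rpow_pos_of_pos hs ρ
      have h1 : ((1:ℝ) * δ) ^ ρ * Q 1 ((1:ℝ) * δ) ≤ ((1:ℝ) * δ) ^ ρ * (1 - ρ) := by
        apply mul_le_mul_of_nonneg_left _ hδρ.le
        simpa using hQ1
      have h2 := hkey t ht'
      simp only [Finset.range_zero, Finset.sum_empty, sub_zero, add_zero] at h2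
      have h3 : t ^ ρ * Q 1 t ≤ (1 - ρ) * δ ^ ρ := by
        have : ((1:ℝ) * δ) ^ ρ = δ ^ ρ := by rw [one_mul]
        rw [this] at h1
        simp only [one_mul] at h1 h2
        push_cast at h1
        linarith
      have htρ : (0 : ℝ) < t ^ ρ := Real.rpow_pos_of_pos ht0 ρ
      have hinv : t ^ (-ρ) = (t ^ ρ)⁻¹ := Real.rpow_neg ht0.le ρ
      simp only [Finset.range_one, Finset.sum_singleton, pow_zero, mul_one]
      rw [hinv]
      rw [inv_mul_eq_div, le_div_iff₀ htρ]
      linarith [h3]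
    | succ k hk ih =>
      intro hkn
      obtain ⟨a, ha, hbound⟩ := ih (by omega)
      have hk0 : (0 : ℝ) < k := by exact_mod_cast hk
      have hs : (0 : ℝ) < ((k + 1 : ℕ) : ℝ) * δ := by
        have : (0 : ℝ) < ((k + 1 : ℕ) : ℝ) := by exact_mod_cast Nat.succ_pos k
        positivity
      have hmono : ∀ t : ℝ, ((k + 1 : ℕ) : ℝ) * δ ≤ t → (k : ℝ) * δ ≤ t := by
        intro t ht
        have : (k : ℝ) * δ ≤ ((k + 1 : ℕ) : ℝ) * δ := by
          apply mul_le_mul_of_nonneg_right _ hδ.le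
          push_cast; linarith
        linarith
      have hkey := cascade_key ρ hρ0 (((k + 1 : ℕ) : ℝ) * δ) hs (Q (k + 1)) k a
        (fun t ht => hdiff (k + 1) (by omega) hkn t ht)
        (by
          intro t ht
          have ht0 : 0 < t := lt_of_lt_of_le hs ht
          have h := hderivk (k + 1) (by omega) hkn t ht
          simp only [Nat.add_sub_cancel] at h
          have h2 : -(ρ / t) * (Q (k+1) t - Q k t) =
              -(ρ / t) * Q (k+1) t + (ρ / t) * Q k t := by ring
          rw [h2] at h
          have hpos : (0 : ℝ) < ρ / t := div_pos hρ0 ht0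
          have hQk := hbound t (hmono t ht)
          linarith [mul_le_mul_of_nonneg_left hQk hpos.le])
      set s₀ : ℝ := ((k + 1 : ℕ) : ℝ) * δ with hs₀
      set g : ℝ → ℝ :=
        fun x => ∑ i ∈ Finset.range k, ρ * a i / (i + 1) * x ^ (i + 1) with hg
      have hs₀ρ : (0 : ℝ) < s₀ ^ ρ := Real.rpow_pos_of_pos hs ρ
      set b : ℝ := s₀ ^ ρ * (1 - ρ ^ (k + 1) / (Nat.factorial (k + 1) : ℝ)) -
        g (Real.log s₀) with hb
      set a' : ℕ → ℝ := fun i => if i = 0 then b else ρ * a (i - 1) / i with ha'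
      have hcoef : a' ((k + 1) - 1) =
          (1 - ρ) * δ ^ ρ * ρ ^ ((k + 1) - 1) / (Nat.factorial ((k + 1) - 1) : ℝ) := by
        simp only [Nat.add_sub_cancel, ha']
        rw [if_neg (by omega)]
        rw [ha]
        have hfac : (Nat.factorial k : ℝ) = (k : ℝ) * (Nat.factorial (k - 1) : ℝ) := by
          rw [← Nat.cast_mul, ← Nat.mul_factorial_pred (by omega)]
        have hpow : ρ ^ k = ρ * ρ ^ (k - 1) := by
          conv_lhs => rw [show k = (k - 1) + 1 by omega]
          rw [pow_succ]; ring
        rw [hfac, hpow]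
        have h1 : (Nat.factorial (k - 1) : ℝ) ≠ 0 := by
          exact_mod_cast Nat.factorial_ne_zero (k - 1)
        field_simp
      refine ⟨a', hcoef, ?_⟩
      intro t ht
      have ht0 : 0 < t := lt_of_lt_of_le hs ht
      have h2 := hkey t ht
      have hQinit : s₀ ^ ρ * Q (k + 1) s₀ ≤
          s₀ ^ ρ * (1 - ρ ^ (k + 1) / (Nat.factorial (k + 1) : ℝ)) := by
        apply mul_le_mul_of_nonneg_left _ hs₀ρ.le
        exact hinit (k + 1) (by omega) hkn
      have h3 : t ^ ρ * Q (k + 1) t ≤ b + g (Real.log t) := by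
        simp only [hg]
        simp only [hb, hg]
        linarith
      have ha'0 : a' 0 = b := if_pos rfl
      have ha's : ∀ i : ℕ, a' (i + 1) = ρ * a i / ((i : ℝ) + 1) := by
        intro i
        simp only [ha']
        rw [if_neg (by omega)]
        push_cast
        simp
      have hsum : ∑ i ∈ Finset.range (k + 1), a' i * (Real.log t) ^ i =
          b + g (Real.log t) := by
        rw [Finset.sum_range_succ']
        simp only [ha'0, ha's, hg, pow_zero, mul_one]
        ring
      rw [hsum]
      have htρ : (0 : ℝ) < t ^ ρ := Real.rpow_pos_of_pos ht0 ρ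
      have hinv : t ^ (-ρ) = (t ^ ρ)⁻¹ := Real.rpow_neg ht0.le ρ
      rw [hinv, inv_mul_eq_div, le_div_iff₀ htρ]
      linarith [h3]
  obtain ⟨a, ha, hbound⟩ := main n (by omega) le_rfl
  refine ⟨∑ i ∈ Finset.range (n - 1), Polynomial.C (a i) * Polynomial.X ^ i, ?_, ?_⟩
  · apply Polynomial.natDegree_sum_le_of_forall_le
    intro i hi
    calc (Polynomial.C (a i) * Polynomial.X ^ i).natDegree ≤ i :=
          Polynomial.natDegree_C_mul_X_pow_le (a i) i
      _ ≤ n - 2 := by simp only [Finset.mem_range] at hi; omega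
  · intro t ht
    have h := hbound t ht
    have heval : Polynomial.eval (Real.log t)
        (∑ i ∈ Finset.range (n - 1), Polynomial.C (a i) * Polynomial.X ^ i) =
        ∑ i ∈ Finset.range (n - 1), a i * (Real.log t) ^ i := by
      rw [Polynomial.eval_finset_sum]
      simp
    rw [heval]
    have hsplit : ∑ i ∈ Finset.range n, a i * (Real.log t) ^ i =
        (1 - ρ) * δ ^ ρ * ρ ^ (n - 1) / (Nat.factorial (n - 1) : ℝ) *
          (Real.log t) ^ (n - 1) +
        ∑ i ∈ Finset.range (n - 1), a i * (Real.log t) ^ i := by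
      conv_lhs => rw [show n = (n - 1) + 1 by omega]
      rw [Finset.sum_range_succ, ha]
      ring
    rw [hsplit] at h
    exact h
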